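/- arXiv:2603.28543 — 3 statements merged into one kernel-verified Lean document; each statement's English description precedes it below -/
import Mathlib

section
/- For every complex number z, the infinite product z · ∏_{n=1}^∞ (1 + z/(π n)) (1 − z/(π n)), with factors ordered by increasing n, converges to sin z. -/
open Filter Real

theorem stmt_2 (z : ℂ) :
    Filter.Tendsto
      (fun N : ℕ => z * ∏ n ∈ Finset.range N,
        ((1 + z / (π * (n + 1))) * (1 - z / (π * (n + 1)))))
      Filter.atTop (nhds (Complex.sin z)) := by
  have hπ : (π : ℂ) ≠ 0 := Complex.ofReal_ne_zero.mpr Real.pi_ne_zero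
  have h := Complex.tendsto_euler_sin_prod (z / π)
  have hz : (π : ℂ) * (z / π) = z := by field_simp
  rw [hz] at h
  convert h using 2 with N
  congr 1
  apply Finset.prod_congr rfl
  intro n _
  have hn : ((n : ℂ) + 1) ≠ 0 := Nat.cast_add_one_ne_zero n
  field_simp
  ring
end

section
/- For all complex x, y such that x, y, and x+y are not nonpositive integers, the beta function satisfies B(x,y) = ((x+y)/(xy)) · ∏_{n=1}^∞ [ (1 + (x+y)/n) / ((1 + x/n)(1 + y/n)) ], where the product converges. -/
/-- The Euler beta function `B(x,y) = Γ(x)Γ(y)/Γ(x+y)`. -/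
noncomputable def betaFn (x y : ℂ) : ℂ :=
  Complex.Gamma x * Complex.Gamma y / Complex.Gamma (x + y)

private lemma ne_zero_shift {x : ℂ} (hx : ∀ n : ℕ, x ≠ -n) (k : ℕ) : x + (k + 1) ≠ 0 := by
  intro h
  apply hx (k + 1)
  push_cast
  linear_combination h

theorem stmt_7 (x y : ℂ)
    (hx : ∀ n : ℕ, x ≠ -n) (hy : ∀ n : ℕ, y ≠ -n) (hxy : ∀ n : ℕ, x + y ≠ -n) :
    Filter.Tendsto
      (fun N : ℕ => (x + y) / (x * y) * ∏ n ∈ Finset.range N,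
        (1 + (x + y) / (n + 1)) / ((1 + x / (n + 1)) * (1 + y / (n + 1))))
      Filter.atTop (nhds (betaFn x y)) := by
  have hx0 : x ≠ 0 := by simpa using hx 0
  have hy0 : y ≠ 0 := by simpa using hy 0
  have hxy0 : x + y ≠ 0 := by simpa using hxy 0
  have hG : Complex.Gamma (x + y) ≠ 0 := by
    apply Complex.Gamma_ne_zero
    intro m
    have := hxy m
    simpa using this
  have hlim : Filter.Tendsto
      (fun N : ℕ => Complex.GammaSeq x N * Complex.GammaSeq y N / Complex.GammaSeq (x + y) N)
      Filter.atTop (nhds (betaFn x y)) :=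
    ((Complex.GammaSeq_tendsto_Gamma x).mul (Complex.GammaSeq_tendsto_Gamma y)).div
      (Complex.GammaSeq_tendsto_Gamma (x + y)) hG
  apply hlim.congr'
  filter_upwards [Filter.eventually_ge_atTop 1] with N hN
  have hN0 : (N : ℂ) ≠ 0 := Nat.cast_ne_zero.mpr (by omega)
  -- expand GammaSeq
  rw [Complex.GammaSeq, Complex.GammaSeq, Complex.GammaSeq]
  rw [Finset.prod_range_succ' (fun j : ℕ => x + j), Finset.prod_range_succ' (fun j : ℕ => y + j),
    Finset.prod_range_succ' (fun j : ℕ => (x + y) + j)]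
  simp only [Nat.cast_zero, add_zero]
  have hcast : ∀ (k : ℕ), ((k : ℂ) + 1) = ((k + 1 : ℕ) : ℂ) := by intro k; push_cast; ring
  -- rewrite shifted products
  have hprodx : ∀ z : ℂ, (∏ j ∈ Finset.range N, (z + (j + 1 : ℕ)))
      = ∏ j ∈ Finset.range N, (z + (j + 1)) := by
    intro z; refine Finset.prod_congr rfl fun j _ => by push_cast; ring
  rw [hprodx x, hprodx y, hprodx (x + y)]
  set A := ∏ j ∈ Finset.range N, (x + (j + 1)) with hA
  set B := ∏ j ∈ Finset.range N, (y + (j + 1)) with hB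
  set C := ∏ j ∈ Finset.range N, ((x + y) + (j + 1)) with hC
  have hA0 : A ≠ 0 := Finset.prod_ne_zero_iff.mpr fun j _ => ne_zero_shift hx j
  have hB0 : B ≠ 0 := Finset.prod_ne_zero_iff.mpr fun j _ => ne_zero_shift hy j
  have hfac : (N.factorial : ℂ) = ∏ j ∈ Finset.range N, ((j : ℂ) + 1) := by
    rw [← Finset.prod_range_add_one_eq_factorial]
    push_cast
    ring
  -- LHS product
  have hLHS : (∏ n ∈ Finset.range N,
      (1 + (x + y) / (n + 1)) / ((1 + x / (n + 1)) * (1 + y / (n + 1))))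
      = (C * (N.factorial : ℂ)) / (A * B) := by
    rw [hfac]
    rw [show (C * ∏ j ∈ Finset.range N, ((j : ℂ) + 1)) / (A * B)
        = ∏ n ∈ Finset.range N,
          ((x + y + (n + 1)) * ((n : ℂ) + 1) / ((x + (n + 1)) * (y + (n + 1)))) by
      rw [Finset.prod_div_distrib, Finset.prod_mul_distrib, Finset.prod_mul_distrib, hA, hB, hC]]
    refine Finset.prod_congr rfl fun n _ => ?_
    have hn1 : (n : ℂ) + 1 ≠ 0 := by
      have := hcast n; rw [this]; exact Nat.cast_ne_zero.mpr (by omega)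
    have h1 : x + ((n : ℂ) + 1) ≠ 0 := ne_zero_shift hx n
    have h2 : y + ((n : ℂ) + 1) ≠ 0 := ne_zero_shift hy n
    have h3 : x + y + ((n : ℂ) + 1) ≠ 0 := ne_zero_shift hxy n
    have e1 : 1 + (x + y) / ((n : ℂ) + 1) = (x + y + ((n : ℂ) + 1)) / ((n : ℂ) + 1) := by
      field_simp
      ring
    have e2 : 1 + x / ((n : ℂ) + 1) = (x + ((n : ℂ) + 1)) / ((n : ℂ) + 1) := by field_simp; ring
    have e3 : 1 + y / ((n : ℂ) + 1) = (y + ((n : ℂ) + 1)) / ((n : ℂ) + 1) := by field_simp; ring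
    rw [e1, e2, e3]
    field_simp
  rw [hLHS]
  have hpow : (N : ℂ) ^ (x + y) = (N : ℂ) ^ x * (N : ℂ) ^ y :=
    Complex.cpow_add _ _ hN0
  have hpx : (N : ℂ) ^ x ≠ 0 := fun h => hN0 ((Complex.cpow_eq_zero_iff _ _).mp h).1
  have hpy : (N : ℂ) ^ y ≠ 0 := fun h => hN0 ((Complex.cpow_eq_zero_iff _ _).mp h).1
  have hfac0 : (N.factorial : ℂ) ≠ 0 := Nat.cast_ne_zero.mpr (N.factorial_ne_zero)
  rw [hpow]
  field_simp
end

section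
/- For all complex x, y such that x, y, and 1−x−y are not nonpositive integers, the function Γ(x)Γ(y)Γ(1−x−y)/(Γ(x+y)Γ(1−x)Γ(1−y)) equals ((x+y)(1−x)(1−y))/(xy(1−x−y)) · ∏_{n=1}^∞ [ (1+(x+y)/n)(1−x/(n+1))(1−y/(n+1)) ] / [ (1+x/n)(1+y/n)(1−(x+y)/(n+1)) ]. -/
open Complex

namespace Stmt9

noncomputable def P (x y : ℂ) (N : ℕ) : ℂ :=
  (x + y) * (1 - x) * (1 - y) / (x * y * (1 - x - y)) *
    ∏ n ∈ Finset.range N,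
      (1 + (x + y) / (n + 1)) * (1 - x / (n + 2)) * (1 - y / (n + 2)) /
        ((1 + x / (n + 1)) * (1 + y / (n + 1)) * (1 - (x + y) / (n + 2)))

noncomputable def Q (x y : ℂ) (N : ℕ) : ℂ :=
  (∏ j ∈ Finset.range (N + 1), ((x + y + j) * (1 - x + j) * (1 - y + j))) /
    (((N : ℂ) + 1) * ∏ j ∈ Finset.range (N + 1), ((x + j) * (y + j) * (1 - x - y + j)))

lemma shift_ne (w : ℂ) (hw : ∀ n : ℕ, w ≠ -n) (j : ℕ) : w + j ≠ 0 := by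
  intro h
  exact hw j (by linear_combination h)

lemma natc_ne (n : ℕ) : ((n : ℂ) + 1) ≠ 0 := by
  have : ((n + 1 : ℕ) : ℂ) ≠ 0 := Nat.cast_ne_zero.mpr (Nat.succ_ne_zero n)
  exact_mod_cast this

lemma step_aux (A B n u0 u4 u5 v1 v2 v3 : ℂ)
    (hB : B ≠ 0) (h1 : n + 1 ≠ 0) (h2 : n + 2 ≠ 0)
    (hv1 : v1 ≠ 0) (hv2 : v2 ≠ 0) (hv3 : v3 ≠ 0) :
    A / ((n + 1) * B) *
        (u0 / (n + 1) * (u4 / (n + 2)) * (u5 / (n + 2)) /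
          (v1 / (n + 1) * (v2 / (n + 1)) * (v3 / (n + 2)))) =
      A * (u0 * u4 * u5) / ((n + 1 + 1) * (B * (v1 * v2 * v3))) := by
  have h2' : n + 1 + 1 ≠ 0 := by intro h; exact h2 (by linear_combination h)
  have hV : v1 * v2 * v3 ≠ 0 := mul_ne_zero (mul_ne_zero hv1 hv2) hv3
  have hU : u0 / (n + 1) * (u4 / (n + 2)) * (u5 / (n + 2)) =
      u0 * u4 * u5 / ((n + 1) * (n + 2) * (n + 2)) := by
    rw [div_mul_div_comm, div_mul_div_comm]
  have hW : v1 / (n + 1) * (v2 / (n + 1)) * (v3 / (n + 2)) =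
      v1 * v2 * v3 / ((n + 1) * (n + 1) * (n + 2)) := by
    rw [div_mul_div_comm, div_mul_div_comm]
  rw [hU, hW, div_div_div_eq, div_mul_div_comm,
    div_eq_div_iff
      (mul_ne_zero (mul_ne_zero h1 hB)
        (mul_ne_zero (mul_ne_zero (mul_ne_zero h1 h2) h2) hV))
      (mul_ne_zero h2' (mul_ne_zero hB hV))]
  ring

lemma PQ (x y : ℂ) (hx : ∀ n : ℕ, x ≠ -n) (hy : ∀ n : ℕ, y ≠ -n)
    (hz : ∀ n : ℕ, 1 - x - y ≠ -n) (N : ℕ) : P x y N = Q x y N := by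
  have hx0 := shift_ne x hx
  have hy0 := shift_ne y hy
  have hz0 := shift_ne _ hz
  induction N with
  | zero => simp [P, Q]
  | succ N ih =>
    have hstep : P x y (N + 1) = P x y N *
        ((1 + (x + y) / ((N : ℂ) + 1)) * (1 - x / ((N : ℂ) + 2)) * (1 - y / ((N : ℂ) + 2)) /
          ((1 + x / ((N : ℂ) + 1)) * (1 + y / ((N : ℂ) + 1)) * (1 - (x + y) / ((N : ℂ) + 2)))) := by
      simp only [P]
      rw [Finset.prod_range_succ, ← mul_assoc]
    rw [hstep, ih, Q, Q]
    have hD : (∏ j ∈ Finset.range (N + 1), ((x + j) * (y + j) * (1 - x - y + j))) ≠ 0 :=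
      Finset.prod_ne_zero_iff.mpr fun j _ =>
        mul_ne_zero (mul_ne_zero (hx0 j) (hy0 j)) (hz0 j)
    have c1 : ((N : ℂ) + 1) ≠ 0 := natc_ne N
    have c2 : ((N : ℂ) + 2) ≠ 0 := by
      intro h; apply natc_ne (N + 1); push_cast; linear_combination h
    have hx1 : x + ((N : ℂ) + 1) ≠ 0 := by
      intro h; apply hx0 (N + 1); push_cast; linear_combination h
    have hy1 : y + ((N : ℂ) + 1) ≠ 0 := by
      intro h; apply hy0 (N + 1); push_cast; linear_combination h
    have hz1 : 1 - x - y + ((N : ℂ) + 1) ≠ 0 := by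
      intro h; apply hz0 (N + 1); push_cast; linear_combination h
    have e0 : 1 + (x + y) / ((N : ℂ) + 1) = (x + y + ((N : ℂ) + 1)) / ((N : ℂ) + 1) := by
      field_simp; ring
    have e1 : 1 + x / ((N : ℂ) + 1) = (x + ((N : ℂ) + 1)) / ((N : ℂ) + 1) := by
      field_simp; ring
    have e2 : 1 + y / ((N : ℂ) + 1) = (y + ((N : ℂ) + 1)) / ((N : ℂ) + 1) := by
      field_simp; ring
    have e3 : 1 - (x + y) / ((N : ℂ) + 2) = (1 - x - y + ((N : ℂ) + 1)) / ((N : ℂ) + 2) := by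
      field_simp; ring
    have e4 : 1 - x / ((N : ℂ) + 2) = (1 - x + ((N : ℂ) + 1)) / ((N : ℂ) + 2) := by
      field_simp; ring
    have e5 : 1 - y / ((N : ℂ) + 2) = (1 - y + ((N : ℂ) + 1)) / ((N : ℂ) + 2) := by
      field_simp; ring
    have pn := Finset.prod_range_succ
      (fun j : ℕ => (x + y + (j : ℂ)) * (1 - x + j) * (1 - y + j)) (N + 1)
    have pd := Finset.prod_range_succ
      (fun j : ℕ => (x + (j : ℂ)) * (y + j) * (1 - x - y + j)) (N + 1)
    rw [e0, e1, e2, e3, e4, e5, pn, pd]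
    push_cast
    exact step_aux _ _ _ _ _ _ _ _ _ hD c1 c2 hx1 hy1 hz1

lemma aux2 (n f Dx Dy Dz Ds D1x D1y px py pz ps p1x p1y : ℂ)
    (hn1 : n + 1 ≠ 0) (nDx : Dx ≠ 0) (nDy : Dy ≠ 0) (nDz : Dz ≠ 0)
    (nDs : Ds ≠ 0) (nD1x : D1x ≠ 0) (nD1y : D1y ≠ 0)
    (nf : f ≠ 0) (nps : ps ≠ 0) (np1x : p1x ≠ 0) (np1y : p1y ≠ 0)
    (h1 : px * py * pz * n = ps * p1x * p1y) :
    Ds * D1x * D1y / ((n + 1) * (Dx * Dy * Dz)) =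
      n / (n + 1) *
        (px * f / Dx * (py * f / Dy) * (pz * f / Dz) /
          (ps * f / Ds * (p1x * f / D1x) * (p1y * f / D1y))) := by
  have hU : px * f / Dx * (py * f / Dy) * (pz * f / Dz) =
      px * f * (py * f) * (pz * f) / (Dx * Dy * Dz) := by
    rw [div_mul_div_comm, div_mul_div_comm]
  have hV : ps * f / Ds * (p1x * f / D1x) * (p1y * f / D1y) =
      ps * f * (p1x * f) * (p1y * f) / (Ds * D1x * D1y) := by
    rw [div_mul_div_comm, div_mul_div_comm]
  rw [hU, hV, div_div_div_eq, div_mul_div_comm,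
    div_eq_div_iff (mul_ne_zero hn1 (mul_ne_zero (mul_ne_zero nDx nDy) nDz))
      (mul_ne_zero hn1 (mul_ne_zero (mul_ne_zero (mul_ne_zero nDx nDy) nDz)
        (mul_ne_zero (mul_ne_zero (mul_ne_zero nps nf) (mul_ne_zero np1x nf))
          (mul_ne_zero np1y nf))))]
  linear_combination (-((n + 1) * (Ds * D1x * D1y) * (Dx * Dy * Dz) * f * f * f)) * h1

lemma Q_eq_gammaSeq (x y : ℂ)
    (hx0 : ∀ j : ℕ, x + j ≠ 0) (hy0 : ∀ j : ℕ, y + j ≠ 0)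
    (hz0 : ∀ j : ℕ, 1 - x - y + j ≠ 0) (hs0 : ∀ j : ℕ, x + y + j ≠ 0)
    (h1x0 : ∀ j : ℕ, 1 - x + j ≠ 0) (h1y0 : ∀ j : ℕ, 1 - y + j ≠ 0)
    (N : ℕ) (hN : 1 ≤ N) :
    Q x y N = (N : ℂ) / ((N : ℂ) + 1) *
      (GammaSeq x N * GammaSeq y N * GammaSeq (1 - x - y) N /
        (GammaSeq (x + y) N * GammaSeq (1 - x) N * GammaSeq (1 - y) N)) := by
  have hNne : (N : ℂ) ≠ 0 := Nat.cast_ne_zero.mpr (by omega)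
  have hfac : ((Nat.factorial N : ℕ) : ℂ) ≠ 0 := Nat.cast_ne_zero.mpr (Nat.factorial_ne_zero N)
  have c1 : ((N : ℂ) + 1) ≠ 0 := natc_ne N
  have A1 : (N : ℂ) ^ x * (N : ℂ) ^ y * (N : ℂ) ^ (1 - x - y) = (N : ℂ) ^ (1 : ℂ) := by
    rw [← cpow_add _ _ hNne, ← cpow_add _ _ hNne]
    congr 1; ring
  have A2 : (N : ℂ) ^ (x + y) * (N : ℂ) ^ (1 - x) * (N : ℂ) ^ (1 - y) = (N : ℂ) ^ (2 : ℂ) := by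
    rw [← cpow_add _ _ hNne, ← cpow_add _ _ hNne]
    congr 1; ring
  have A3 : ((N : ℂ)) ^ (1 : ℂ) = (N : ℂ) := cpow_one _
  have A4 : ((N : ℂ)) ^ (2 : ℂ) = (N : ℂ) * (N : ℂ) := by
    rw [show (2 : ℂ) = ((2 : ℕ) : ℂ) by norm_num, cpow_natCast]; ring
  have h1 : (N : ℂ) ^ x * (N : ℂ) ^ y * (N : ℂ) ^ (1 - x - y) * (N : ℂ) =
      (N : ℂ) ^ (x + y) * (N : ℂ) ^ (1 - x) * (N : ℂ) ^ (1 - y) := by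
    rw [A1, A2, A3, A4]
  simp only [Q, GammaSeq, Finset.prod_mul_distrib]
  set Dx := ∏ j ∈ Finset.range (N + 1), (x + (j : ℂ)) with hDx
  set Dy := ∏ j ∈ Finset.range (N + 1), (y + (j : ℂ)) with hDy
  set Dz := ∏ j ∈ Finset.range (N + 1), (1 - x - y + (j : ℂ)) with hDz
  set Ds := ∏ j ∈ Finset.range (N + 1), (x + y + (j : ℂ)) with hDs
  set D1x := ∏ j ∈ Finset.range (N + 1), (1 - x + (j : ℂ)) with hD1x
  set D1y := ∏ j ∈ Finset.range (N + 1), (1 - y + (j : ℂ)) with hD1y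
  have nDx : Dx ≠ 0 := Finset.prod_ne_zero_iff.mpr fun j _ => hx0 j
  have nDy : Dy ≠ 0 := Finset.prod_ne_zero_iff.mpr fun j _ => hy0 j
  have nDz : Dz ≠ 0 := Finset.prod_ne_zero_iff.mpr fun j _ => hz0 j
  have nDs : Ds ≠ 0 := Finset.prod_ne_zero_iff.mpr fun j _ => hs0 j
  have nD1x : D1x ≠ 0 := Finset.prod_ne_zero_iff.mpr fun j _ => h1x0 j
  have nD1y : D1y ≠ 0 := Finset.prod_ne_zero_iff.mpr fun j _ => h1y0 j
  have ncp : ∀ w : ℂ, (N : ℂ) ^ w ≠ 0 := fun w h =>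
    hNne ((cpow_eq_zero_iff _ _).mp h).1
  exact aux2 (N : ℂ) (Nat.factorial N : ℂ) Dx Dy Dz Ds D1x D1y _ _ _ _ _ _
    c1 nDx nDy nDz nDs nD1x nD1y hfac (ncp _) (ncp _) (ncp _) h1

lemma Q_eventually_zero (x y : ℂ) (m : ℕ)
    (h : (x + y + (m : ℂ)) * (1 - x + (m : ℂ)) * (1 - y + (m : ℂ)) = 0) :
    ∀ N, m ≤ N → Q x y N = 0 := by
  intro N hN
  simp only [Q]
  rw [Finset.prod_eq_zero (Finset.mem_range.mpr (by omega)) h, zero_div]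

end Stmt9

theorem stmt_9 (x y : ℂ)
    (hx : ∀ n : ℕ, x ≠ -n) (hy : ∀ n : ℕ, y ≠ -n) (hz : ∀ n : ℕ, 1 - x - y ≠ -n) :
    Filter.Tendsto
      (fun N : ℕ =>
        (x + y) * (1 - x) * (1 - y) / (x * y * (1 - x - y)) *
          ∏ n ∈ Finset.range N,
            (1 + (x + y) / (n + 1)) * (1 - x / (n + 2)) * (1 - y / (n + 2)) /
              ((1 + x / (n + 1)) * (1 + y / (n + 1)) * (1 - (x + y) / (n + 2))))
      Filter.atTop
      (nhds (Gamma x * Gamma y * Gamma (1 - x - y) /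
        (Gamma (x + y) * Gamma (1 - x) * Gamma (1 - y)))) := by
  show Filter.Tendsto (Stmt9.P x y) Filter.atTop _
  have hx0 := Stmt9.shift_ne x hx
  have hy0 := Stmt9.shift_ne y hy
  have hz0 := Stmt9.shift_ne _ hz
  by_cases hA : Gamma (x + y) * Gamma (1 - x) * Gamma (1 - y) = 0
  · rw [hA, div_zero]
    have hex : ∃ m : ℕ, (x + y + (m : ℂ)) * (1 - x + (m : ℂ)) * (1 - y + (m : ℂ)) = 0 := by
      have hw : Gamma (x + y) = 0 ∨ Gamma (1 - x) = 0 ∨ Gamma (1 - y) = 0 := by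
        rcases mul_eq_zero.mp hA with h | h
        · rcases mul_eq_zero.mp h with h' | h'
          · exact Or.inl h'
          · exact Or.inr (Or.inl h')
        · exact Or.inr (Or.inr h)
      have key : ∀ w : ℂ, Gamma w = 0 → ∃ m : ℕ, w = -m := by
        intro w hw0
        by_contra hc
        push_neg at hc
        exact Complex.Gamma_ne_zero hc hw0
      rcases hw with h | h | h
      · obtain ⟨m, hm⟩ := key _ h
        exact ⟨m, by rw [hm]; ring⟩
      · obtain ⟨m, hm⟩ := key _ h
        exact ⟨m, by rw [hm]; ring⟩
      · obtain ⟨m, hm⟩ := key _ h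
        exact ⟨m, by rw [hm]; ring⟩
    obtain ⟨m, hm⟩ := hex
    have hev : ∀ᶠ N in Filter.atTop, Stmt9.P x y N = 0 :=
      Filter.eventually_atTop.mpr ⟨m, fun N hN => by
        rw [Stmt9.PQ x y hx hy hz]
        exact Stmt9.Q_eventually_zero x y m hm N hN⟩
    exact Filter.Tendsto.congr' (hev.mono fun N h => h.symm) tendsto_const_nhds
  · have hGs : Gamma (x + y) ≠ 0 := fun h => hA (by rw [h]; ring)
    have hG1x : Gamma (1 - x) ≠ 0 := fun h => hA (by rw [h]; ring)
    have hG1y : Gamma (1 - y) ≠ 0 := fun h => hA (by rw [h]; ring)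
    have hs : ∀ m : ℕ, x + y ≠ -m := fun m hm =>
      hGs (by rw [hm]; exact Complex.Gamma_neg_nat_eq_zero m)
    have h1x : ∀ m : ℕ, 1 - x ≠ -m := fun m hm =>
      hG1x (by rw [hm]; exact Complex.Gamma_neg_nat_eq_zero m)
    have h1y : ∀ m : ℕ, 1 - y ≠ -m := fun m hm =>
      hG1y (by rw [hm]; exact Complex.Gamma_neg_nat_eq_zero m)
    have hs0 := Stmt9.shift_ne _ hs
    have h1x0 := Stmt9.shift_ne _ h1x
    have h1y0 := Stmt9.shift_ne _ h1y
    have hlim : Filter.Tendsto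
        (fun N : ℕ => (N : ℂ) / ((N : ℂ) + 1) *
          (Complex.GammaSeq x N * Complex.GammaSeq y N * Complex.GammaSeq (1 - x - y) N /
            (Complex.GammaSeq (x + y) N * Complex.GammaSeq (1 - x) N *
              Complex.GammaSeq (1 - y) N)))
        Filter.atTop
        (nhds (1 * (Gamma x * Gamma y * Gamma (1 - x - y) /
          (Gamma (x + y) * Gamma (1 - x) * Gamma (1 - y))))) :=
      (tendsto_natCast_div_add_atTop (1 : ℂ)).mul
        ((((Complex.GammaSeq_tendsto_Gamma x).mul (Complex.GammaSeq_tendsto_Gamma y)).mul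
            (Complex.GammaSeq_tendsto_Gamma (1 - x - y))).div
          (((Complex.GammaSeq_tendsto_Gamma (x + y)).mul
              (Complex.GammaSeq_tendsto_Gamma (1 - x))).mul
            (Complex.GammaSeq_tendsto_Gamma (1 - y))) hA)
    rw [one_mul] at hlim
    refine Filter.Tendsto.congr' (Filter.eventually_atTop.mpr ⟨1, fun N hN => ?_⟩) hlim
    rw [← Stmt9.Q_eq_gammaSeq x y hx0 hy0 hz0 hs0 h1x0 h1y0 N hN,
      ← Stmt9.PQ x y hx hy hz]
end
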